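/- Let X be a finite type, a : Finset X → ℝ a non-negative monotone set function, n ≥ 1, α ∈ (0,1], and let x₀, …, x_{n−1} be an α-approximate greedy sequence for a with partial sets B_i and output B_n. Let γ ∈ (0,1] be a lower bound on the submodularity ratio γ_{B_n, n}(a), and let B* ⊆ X with |B*| = n. Then for every i < n, a(B*) − a(B_{i+1}) ≤ (1 − α·γ/n)·(a(B*) − a(B_i)). -/

import Mathlib

open Finset

/-- Marginal gain `Δ_a(x ∣ B) = a(B ∪ {x}) − a(B)`. -/
def margGain {X : Type*} [DecidableEq X] (a : Finset X → ℝ) (x : X) (B : Finset X) : ℝ :=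
  a (insert x B) - a B

/-- The partial set `B_i = {x₀, …, x_{i−1}}` of a sequence `xs`. -/
def partialSet {X : Type*} [DecidableEq X] {n : ℕ} (xs : Fin n → X) (i : ℕ) : Finset X :=
  (Finset.univ.filter (fun j : Fin n => (j : ℕ) < i)).image xs

/-- Monotonicity of `a` on subsets from nonnegative marginal gains. -/
lemma a_subset_mono {X : Type*} [DecidableEq X] (a : Finset X → ℝ)
    (ha_mono : ∀ (B : Finset X) (x : X), 0 ≤ margGain a x B) :
    ∀ (C B : Finset X), B ⊆ C → a B ≤ a C := by
  suffices h : ∀ (k : ℕ) (C B : Finset X), B ⊆ C → (C \ B).card = k → a B ≤ a C by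
    intro C B hBC; exact h _ C B hBC rfl
  intro k
  induction k with
  | zero =>
    intro C B hBC hcard
    have : C \ B = ∅ := Finset.card_eq_zero.mp hcard
    have : C ⊆ B := fun x hx => by
      by_contra hxB
      exact absurd (Finset.mem_sdiff.mpr ⟨hx, hxB⟩) (by simp [this])
    rw [Finset.Subset.antisymm hBC this]
  | succ k ih =>
    intro C B hBC hcard
    have hne : (C \ B).Nonempty := Finset.card_pos.mp (by omega)
    obtain ⟨x, hx⟩ := hne
    rw [Finset.mem_sdiff] at hx
    have h1 : a B ≤ a (insert x B) := by
      have := ha_mono B x; simp only [margGain] at this; linarith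
    refine h1.trans (ih C (insert x B) (Finset.insert_subset hx.1 hBC) ?_)
    have : C \ insert x B = (C \ B).erase x := by
      ext y; simp [Finset.mem_sdiff, Finset.mem_erase, and_comm]; tauto
    rw [this, Finset.card_erase_of_mem (Finset.mem_sdiff.mpr hx)]
    omega

lemma partialSet_succ {X : Type*} [DecidableEq X] {n : ℕ} (xs : Fin n → X) (i : Fin n) :
    partialSet xs ((i : ℕ) + 1) = insert (xs i) (partialSet xs i) := by
  unfold partialSet
  rw [← Finset.image_insert]
  congr 1
  ext j
  simp only [Finset.mem_insert, Finset.mem_filter, Finset.mem_univ, true_and, Fin.lt_def,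
    Fin.ext_iff]
  omega

lemma partialSet_mono {X : Type*} [DecidableEq X] {n : ℕ} (xs : Fin n → X) {i j : ℕ}
    (h : i ≤ j) : partialSet xs i ⊆ partialSet xs j := by
  unfold partialSet
  apply Finset.image_subset_image
  intro k hk
  simp only [Finset.mem_filter] at *
  exact ⟨hk.1, lt_of_lt_of_le hk.2 h⟩

/-- per-step geometric decrease of the optimality gap of the
α-approximate greedy algorithm:
`a(B*) − a(B_{i+1}) ≤ (1 − α·γ/n)·(a(B*) − a(B_i))`. -/
theorem approx_greedy_gap_decrease {X : Type*} [Fintype X] [DecidableEq X]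
    (a : Finset X → ℝ)
    (ha_nonneg : ∀ B : Finset X, 0 ≤ a B)
    (ha_mono : ∀ (B : Finset X) (x : X), 0 ≤ margGain a x B)
    (n : ℕ) (hn : 1 ≤ n)
    (α : ℝ) (hα0 : 0 < α) (hα1 : α ≤ 1)
    (xs : Fin n → X)
    (hgreedy : ∀ i : Fin n, ∀ x : X, x ∉ partialSet xs i →
      α * margGain a x (partialSet xs i) ≤ margGain a (xs i) (partialSet xs i))
    (γ : ℝ) (hγ0 : 0 < γ) (hγ1 : γ ≤ 1)
    (hγ : ∀ S : Finset X, S.card ≤ n → ∀ B' ⊆ partialSet xs n \ S,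
      γ * (a (B' ∪ S) - a B') ≤ ∑ x ∈ S, margGain a x B')
    (Bstar : Finset X) (hBstar : Bstar.card = n) :
    ∀ i : Fin n,
      a Bstar - a (partialSet xs ((i : ℕ) + 1)) ≤
        (1 - α * γ / (n : ℝ)) * (a Bstar - a (partialSet xs i)) := by
  intro i
  set Bi := partialSet xs i with hBi
  set S := Bstar \ Bi with hS
  have hnpos : (0 : ℝ) < n := by exact_mod_cast hn
  -- Δ = marginal gain of step i
  set Δ := margGain a (xs i) Bi with hΔdef
  have hΔ0 : 0 ≤ Δ := ha_mono Bi (xs i)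
  -- B_{i+1} = insert (xs i) B_i
  have hsucc : partialSet xs ((i : ℕ) + 1) = insert (xs i) Bi := partialSet_succ xs i
  have hstep : a (partialSet xs ((i : ℕ) + 1)) = a Bi + Δ := by
    rw [hsucc]; simp [hΔdef, margGain]
  -- submodularity ratio applied to S and B' = Bi
  have hScard : S.card ≤ n := le_trans (Finset.card_le_card (Finset.sdiff_subset)) hBstar.le
  have hBiSub : Bi ⊆ partialSet xs n \ S := by
    intro x hx
    rw [Finset.mem_sdiff]
    refine ⟨partialSet_mono xs (le_of_lt i.isLt) hx, ?_⟩
    simp [hS, Finset.mem_sdiff, hx]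
  have hsub := hγ S hScard Bi hBiSub
  -- each term of the sum is ≤ Δ/α
  have hsum : ∑ x ∈ S, margGain a x Bi ≤ (S.card : ℝ) * (Δ / α) := by
    rw [← nsmul_eq_mul]
    apply Finset.sum_le_card_nsmul
    intro x hx
    have hxBi : x ∉ Bi := by
      rw [hS, Finset.mem_sdiff] at hx; exact hx.2
    have := hgreedy i x hxBi
    rw [le_div_iff₀ hα0]
    linarith [this]
  have hcard : (S.card : ℝ) ≤ n := by exact_mod_cast hScard
  have hsum2 : ∑ x ∈ S, margGain a x Bi ≤ (n : ℝ) * (Δ / α) := by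
    refine hsum.trans (mul_le_mul_of_nonneg_right hcard ?_)
    positivity
  -- monotonicity: a Bstar ≤ a (Bi ∪ S)
  have hmono : a Bstar ≤ a (Bi ∪ S) := by
    apply a_subset_mono a ha_mono
    intro x hx
    rw [Finset.mem_union]
    by_cases h : x ∈ Bi
    · exact Or.inl h
    · exact Or.inr (by rw [hS, Finset.mem_sdiff]; exact ⟨hx, h⟩)
  -- combine
  have key : γ * (a Bstar - a Bi) ≤ (n : ℝ) * (Δ / α) := by
    calc γ * (a Bstar - a Bi) ≤ γ * (a (Bi ∪ S) - a Bi) := by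
          apply mul_le_mul_of_nonneg_left _ hγ0.le; linarith
      _ ≤ ∑ x ∈ S, margGain a x Bi := hsub
      _ ≤ (n : ℝ) * (Δ / α) := hsum2
  have key2 : α * γ / n * (a Bstar - a Bi) ≤ Δ := by
    rw [div_mul_eq_mul_div, div_le_iff₀ hnpos]
    have : α * (γ * (a Bstar - a Bi)) ≤ α * ((n : ℝ) * (Δ / α)) :=
      mul_le_mul_of_nonneg_left key hα0.le
    calc α * γ * (a Bstar - a Bi) = α * (γ * (a Bstar - a Bi)) := by ring
      _ ≤ α * ((n : ℝ) * (Δ / α)) := this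
      _ = Δ * n := by field_simp
  have expand : (1 - α * γ / (n : ℝ)) * (a Bstar - a Bi) =
      (a Bstar - a Bi) - α * γ / (n : ℝ) * (a Bstar - a Bi) := by ring
  rw [hstep, expand]
  linarith [key2]
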